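/- arXiv:2304.03734 — 4 statements merged into one kernel-verified Lean document; each statement's English description precedes it below -/
import Mathlib

section
/- For all x in the open interval (-1,1), H(1/2 + x/2) ≤ log 2 − x²/2, where H(p) = −p·log p − (1−p)·log(1−p) is the binary entropy function. -/
lemma aux_log_ineq (x : ℝ) (hx0 : 0 ≤ x) (hx1 : x < 1) :
    2 * x ≤ Real.log (1 + x) - Real.log (1 - x) := by
  set f : ℝ → ℝ := fun t => Real.log (1 + t) - Real.log (1 - t) - 2 * t with hf
  have key : ∀ t ∈ Set.Icc (-1/2 : ℝ) x ∪ Set.Ioo (-1:ℝ) 1, True := fun _ _ => trivial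
  have hderiv : ∀ t ∈ Set.Ioo (-1:ℝ) 1,
      HasDerivAt f (1/(1+t) + 1/(1-t) - 2) t := by
    intro t ht
    have h1 : (0:ℝ) < 1 + t := by linarith [ht.1]
    have h2 : (0:ℝ) < 1 - t := by linarith [ht.2]
    have d1 : HasDerivAt (fun t : ℝ => Real.log (1 + t)) (1/(1+t)) t := by
      have := ((hasDerivAt_id t).const_add 1).log h1.ne'
      simpa using this
    have d2 : HasDerivAt (fun t : ℝ => Real.log (1 - t)) ((-1)/(1-t)) t := by
      have := ((hasDerivAt_id t).const_sub 1).log h2.ne'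
      simpa using this
    have d3 : HasDerivAt (fun t : ℝ => 2 * t) 2 t := by
      simpa using (hasDerivAt_id t).const_mul 2
    have := (d1.sub d2).sub d3
    refine this.congr_deriv ?_
    ring
  have hmono : MonotoneOn f (Set.Icc 0 x) := by
    apply monotoneOn_of_deriv_nonneg (convex_Icc 0 x)
    · intro t ht
      have h1 : (0:ℝ) < 1 + t := by linarith [ht.1]
      have h2 : (0:ℝ) < 1 - t := by linarith [ht.2]
      exact ((hderiv t ⟨by linarith, by linarith⟩).continuousAt).continuousWithinAt
    · intro t ht
      rw [interior_Icc] at ht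
      exact ((hderiv t ⟨by linarith [ht.1], by linarith [ht.2]⟩).differentiableAt).differentiableWithinAt
    · intro t ht
      rw [interior_Icc] at ht
      have h1 : (0:ℝ) < 1 + t := by linarith [ht.1]
      have h2 : (0:ℝ) < 1 - t := by linarith [ht.2]
      rw [(hderiv t ⟨by linarith, by linarith⟩).deriv]
      rw [sub_nonneg, div_add_div _ _ h1.ne' h2.ne', le_div_iff₀ (by positivity)]
      nlinarith [ht.1.le]
  have h0 : f 0 = 0 := by simp [hf]
  have := hmono (Set.left_mem_Icc.2 hx0) (Set.right_mem_Icc.2 hx0) hx0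
  rw [h0] at this
  simp only [hf] at this
  linarith

lemma aux_sq_le (x : ℝ) (hx0 : 0 ≤ x) (hx1 : x < 1) :
    x ^ 2 ≤ (1 + x) * Real.log (1 + x) + (1 - x) * Real.log (1 - x) := by
  set g : ℝ → ℝ := fun t => (1+t) * Real.log (1+t) + (1-t) * Real.log (1-t) - t^2 with hg
  have hderiv : ∀ t ∈ Set.Ioo (-1:ℝ) 1,
      HasDerivAt g (Real.log (1+t) - Real.log (1-t) - 2*t) t := by
    intro t ht
    have h1 : (0:ℝ) < 1 + t := by linarith [ht.1]
    have h2 : (0:ℝ) < 1 - t := by linarith [ht.2]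
    have a1 : HasDerivAt (fun t : ℝ => 1 + t) 1 t := by
      simpa using (hasDerivAt_id t).const_add 1
    have a2 : HasDerivAt (fun t : ℝ => 1 - t) (-1) t := by
      simpa using (hasDerivAt_id t).const_sub 1
    have d1 : HasDerivAt (fun t : ℝ => Real.log (1 + t)) (1/(1+t)) t := by
      simpa using a1.log h1.ne'
    have d2 : HasDerivAt (fun t : ℝ => Real.log (1 - t)) ((-1)/(1-t)) t := by
      simpa using a2.log h2.ne'
    have m1 := a1.mul d1
    have m2 := a2.mul d2
    have d3 : HasDerivAt (fun t : ℝ => t^2) (2*t) t := by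
      simpa using hasDerivAt_pow 2 t
    have := (m1.add m2).sub d3
    refine this.congr_deriv ?_
    field_simp
    ring
  have hmono : MonotoneOn g (Set.Icc 0 x) := by
    apply monotoneOn_of_deriv_nonneg (convex_Icc 0 x)
    · intro t ht
      exact ((hderiv t ⟨by linarith [ht.1], by linarith [ht.2]⟩).continuousAt).continuousWithinAt
    · intro t ht
      rw [interior_Icc] at ht
      exact ((hderiv t ⟨by linarith [ht.1], by linarith [ht.2]⟩).differentiableAt).differentiableWithinAt
    · intro t ht
      rw [interior_Icc] at ht
      have ht' : t ∈ Set.Ioo (-1:ℝ) 1 := ⟨by linarith [ht.1], by linarith [ht.2]⟩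
      rw [(hderiv t ht').deriv, sub_nonneg]
      exact aux_log_ineq t ht.1.le (by linarith [ht.2])
  have h0 : g 0 = 0 := by simp [hg]
  have := hmono (Set.left_mem_Icc.2 hx0) (Set.right_mem_Icc.2 hx0) hx0
  rw [h0] at this
  simp only [hg] at this
  linarith

noncomputable def binEntropy (p : ℝ) : ℝ :=
  -p * Real.log p - (1 - p) * Real.log (1 - p)

lemma binEntropy_symm (p : ℝ) : binEntropy (1 - p) = binEntropy p := by
  unfold binEntropy
  have : (1 : ℝ) - (1 - p) = p := by ring
  rw [this]
  ring

lemma key_bound (x : ℝ) (hx0 : 0 ≤ x) (hx1 : x < 1) :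
    binEntropy (1/2 + x/2) ≤ Real.log 2 - x^2 / 2 := by
  have h1 : (0:ℝ) < 1 + x := by linarith
  have h2 : (0:ℝ) < 1 - x := by linarith
  have e1 : (1:ℝ)/2 + x/2 = (1+x)/2 := by ring
  have e2 : (1:ℝ) - (1+x)/2 = (1-x)/2 := by ring
  have l1 : Real.log ((1+x)/2) = Real.log (1+x) - Real.log 2 :=
    Real.log_div h1.ne' two_ne_zero
  have l2 : Real.log ((1-x)/2) = Real.log (1-x) - Real.log 2 :=
    Real.log_div h2.ne' two_ne_zero
  unfold binEntropy
  rw [e1, e2, l1, l2]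
  nlinarith [aux_sq_le x hx0 hx1]

theorem entropy_quadratic_bound :
    ∀ x ∈ Set.Ioo (-1 : ℝ) 1,
      binEntropy (1/2 + x/2) ≤ Real.log 2 - x^2 / 2 := by
  intro x hx
  rcases le_or_gt 0 x with h | h
  · exact key_bound x h hx.2
  · have h' := key_bound (-x) (by linarith) (by linarith [hx.1])
    have : binEntropy (1/2 + x/2) = binEntropy (1/2 + (-x)/2) := by
      rw [← binEntropy_symm (1/2 + x/2)]
      congr 1
      ring
    rw [this]
    calc binEntropy (1/2 + (-x)/2) ≤ Real.log 2 - (-x)^2/2 := h'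
      _ = Real.log 2 - x^2/2 := by ring
end

section
/- Let y be a positive integer and s ∈ (0, 1/2) with s·y an integer. Then the sum over k from 0 to s·y of the binomial coefficients C(y, k) is strictly less than C(y, s·y) · (1−s)/(1−2s). -/
theorem binomial_tail_bound (y m : ℕ) (s : ℝ) (hy : 1 ≤ y)
    (hs0 : 0 < s) (hs1 : s < 1/2) (hm : (m : ℝ) = s * y) :
    (∑ k ∈ Finset.range (m + 1), (y.choose k : ℝ)) <
      (y.choose m : ℝ) * (1 - s) / (1 - 2*s) := by
  have hy' : (1:ℝ) ≤ y := by exact_mod_cast hy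
  have h1s : 0 < 1 - s := by linarith
  have h12s : 0 < 1 - 2*s := by linarith
  set r : ℝ := s / (1 - s) with hrdef
  have hr0 : 0 < r := div_pos hs0 h1s
  have hr1 : r < 1 := (div_lt_one h1s).mpr (by linarith)
  have hmy : m < y := by
    have : (m:ℝ) < y := by rw [hm]; nlinarith
    exact_mod_cast this
  -- step: for k+1 ≤ m, choose y k ≤ r * choose y (k+1)
  have step : ∀ k, k + 1 ≤ m → (y.choose k : ℝ) ≤ r * y.choose (k+1) := by
    intro k hk
    have hky : k < y := lt_trans (lt_of_lt_of_le (Nat.lt_succ_self k) hk) hmy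
    have hid : (y.choose (k+1) : ℝ) * (k+1) = y.choose k * ((y:ℝ) - k) := by
      have h := Nat.choose_succ_right_eq y k
      have hc : ((y.choose (k+1) * (k+1) : ℕ) : ℝ) = ((y.choose k * (y - k) : ℕ) : ℝ) := by
        exact_mod_cast congrArg (Nat.cast : ℕ → ℝ) h
      push_cast [Nat.cast_sub hky.le] at hc
      linarith [hc]
    have hk' : (k:ℝ) + 1 ≤ s * y := by
      rw [← hm]; exact_mod_cast hk
    have hkey : ((k:ℝ) + 1) * (1 - s) ≤ s * ((y:ℝ) - k) := by nlinarith
    have hyk : (0:ℝ) < (y:ℝ) - k := by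
      have : (k:ℝ) < y := by exact_mod_cast hky
      linarith
    rw [hrdef, div_mul_eq_mul_div, le_div_iff₀ h1s]
    have hc' : (0:ℝ) ≤ (y.choose (k+1) : ℝ) := Nat.cast_nonneg _
    nlinarith [mul_nonneg hc' (sub_nonneg.mpr hkey)]
  -- descent: choose y (m-j) ≤ choose y m * r^j
  have descent : ∀ j, j ≤ m → (y.choose (m - j) : ℝ) ≤ (y.choose m : ℝ) * r ^ j := by
    intro j
    induction j with
    | zero => intro _; simp
    | succ j ih =>
      intro hj
      have hj' : j ≤ m := Nat.le_of_succ_le hj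
      have h1 : (m - (j+1)) + 1 ≤ m := by omega
      have h2 : (m - (j+1)) + 1 = m - j := by omega
      calc (y.choose (m - (j+1)) : ℝ) ≤ r * y.choose (m - (j+1) + 1) := step _ h1
        _ = r * y.choose (m - j) := by rw [h2]
        _ ≤ r * ((y.choose m : ℝ) * r ^ j) := by
            exact mul_le_mul_of_nonneg_left (ih hj') hr0.le
        _ = (y.choose m : ℝ) * r ^ (j+1) := by ring
  -- bound each term
  have hterm : ∀ k ∈ Finset.range (m+1), (y.choose k : ℝ) ≤ (y.choose m : ℝ) * r ^ (m - k) := by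
    intro k hk
    have hk' : k ≤ m := Nat.lt_succ_iff.mp (Finset.mem_range.mp hk)
    have h := descent (m - k) (Nat.sub_le m k)
    have e : m - (m - k) = k := by omega
    rwa [e] at h
  have hsum : (∑ k ∈ Finset.range (m + 1), (y.choose k : ℝ))
      ≤ (y.choose m : ℝ) * ∑ j ∈ Finset.range (m+1), r ^ j := by
    rw [Finset.mul_sum]
    calc (∑ k ∈ Finset.range (m + 1), (y.choose k : ℝ))
        ≤ ∑ k ∈ Finset.range (m+1), (y.choose m : ℝ) * r ^ (m - k) :=
          Finset.sum_le_sum hterm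
      _ = ∑ j ∈ Finset.range (m+1), (y.choose m : ℝ) * r ^ j := by
          rw [← Finset.sum_range_reflect]
          apply Finset.sum_congr rfl
          intro j hj
          have hj' := Finset.mem_range.mp hj
          have e : m - (m + 1 - 1 - j) = j := by omega
          rw [e]
      _ = ∑ j ∈ Finset.range (m+1), (y.choose m : ℝ) * r ^ j := rfl
  have hG : (∑ j ∈ Finset.range (m+1), r ^ j) < (1 - s) / (1 - 2*s) := by
    have hgm := geom_sum_mul r (m+1)
    have hpow : 0 < r ^ (m+1) := pow_pos hr0 _
    have h1r : 0 < 1 - r := by linarith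
    have hlt : (∑ j ∈ Finset.range (m+1), r ^ j) * (1 - r) < 1 := by nlinarith
    have hGlt : (∑ j ∈ Finset.range (m+1), r ^ j) < 1 / (1 - r) :=
      (lt_div_iff₀ h1r).mpr hlt
    have heq : (1:ℝ) / (1 - r) = (1 - s) / (1 - 2*s) := by
      have h1r' : 1 - r = (1-2*s)/(1-s) := by rw [hrdef]; field_simp; ring
      rw [h1r', one_div_div]
    rwa [heq] at hGlt
  have hchoose : (0:ℝ) < (y.choose m : ℝ) := by
    exact_mod_cast Nat.choose_pos hmy.le
  calc (∑ k ∈ Finset.range (m + 1), (y.choose k : ℝ))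
      ≤ (y.choose m : ℝ) * ∑ j ∈ Finset.range (m+1), r ^ j := hsum
    _ < (y.choose m : ℝ) * ((1 - s) / (1 - 2*s)) :=
        mul_lt_mul_of_pos_left hG hchoose
    _ = (y.choose m : ℝ) * (1 - s) / (1 - 2*s) := by ring
end

section
/- For all real g > 0, n ≥ 0 and x with x² ≤ g, setting λ = n/g, the inequality g·H(1/2 + x/(2√g)) + (3g+2n)·H(1/2 + 3x/(2(3+2λ)√g)) ≤ g(2+λ)·log 4 − (6+λ)x²/(3+2λ) holds, provided both arguments of H lie in (0,1). -/
lemma artanh_ge (t : ℝ) (h0 : 0 ≤ t) (h1 : t < 1) :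
    2*t ≤ Real.log (1+t) - Real.log (1-t) := by
  set f : ℝ → ℝ := fun s => Real.log (1+s) - Real.log (1-s) - 2*s with hf
  have hd : ∀ s : ℝ, 0 ≤ s → s < 1 →
      HasDerivAt f (1/(1+s) - (-1)/(1-s) - 2) s := by
    intro s hs0 hs1
    have h1p : (1:ℝ)+s ≠ 0 := by linarith
    have h1m : (1:ℝ)-s ≠ 0 := by linarith
    have d1 : HasDerivAt (fun s : ℝ => Real.log (1+s)) (1/(1+s)) s := by
      simpa using (((hasDerivAt_id s).const_add 1).log h1p)
    have d2 : HasDerivAt (fun s : ℝ => Real.log (1-s)) ((-1)/(1-s)) s := by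
      simpa using (((hasDerivAt_id s).const_sub 1).log h1m)
    have d3 : HasDerivAt (fun s : ℝ => 2*s) 2 s := by
      simpa using ((hasDerivAt_id s).const_mul 2)
    exact (d1.sub d2).sub d3
  have key : MonotoneOn f (Set.Icc 0 t) := by
    apply monotoneOn_of_deriv_nonneg (convex_Icc 0 t)
    · apply ContinuousOn.sub
      apply ContinuousOn.sub
      · apply Real.continuousOn_log.comp (by fun_prop)
        intro y hy
        simp only [Set.mem_Icc] at hy
        simp only [Set.mem_compl_iff, Set.mem_singleton_iff]
        intro h; linarith [hy.1]
      · apply Real.continuousOn_log.comp (by fun_prop)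
        intro y hy
        simp only [Set.mem_Icc] at hy
        simp only [Set.mem_compl_iff, Set.mem_singleton_iff]
        intro h; linarith [hy.2]
      · fun_prop
    · intro s hs
      rw [interior_Icc] at hs
      exact ((hd s hs.1.le (hs.2.trans h1)).differentiableAt).differentiableWithinAt
    · intro s hs
      rw [interior_Icc] at hs
      rw [(hd s hs.1.le (hs.2.trans h1)).deriv]
      have h1p : (0:ℝ) < 1+s := by linarith [hs.1]
      have h1m : (0:ℝ) < 1-s := by linarith [hs.2.trans h1]
      have e : 1/(1+s) - (-1)/(1-s) - 2 = 2*s^2/((1+s)*(1-s)) := by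
        field_simp; ring
      rw [e]
      positivity
  have h := key (Set.left_mem_Icc.mpr h0) (Set.right_mem_Icc.mpr h0) h0
  simp only [hf] at h
  simp at h
  linarith

lemma klg_ge (u : ℝ) (h0 : 0 ≤ u) (h1 : u < 1) :
    u^2 ≤ (1+u)*Real.log (1+u) + (1-u)*Real.log (1-u) := by
  set f : ℝ → ℝ := fun s => (1+s)*Real.log (1+s) + (1-s)*Real.log (1-s) - s^2 with hf
  have hd : ∀ s : ℝ, 0 ≤ s → s < 1 →
      HasDerivAt f (Real.log (1+s) - Real.log (1-s) - 2*s) s := by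
    intro s hs0 hs1
    have h1p : (1:ℝ)+s ≠ 0 := by linarith
    have h1m : (1:ℝ)-s ≠ 0 := by linarith
    have da : HasDerivAt (fun s : ℝ => 1+s) 1 s := by
      simpa using ((hasDerivAt_id s).const_add 1)
    have db : HasDerivAt (fun s : ℝ => 1-s) (-1) s := by
      simpa using ((hasDerivAt_id s).const_sub 1)
    have d1 : HasDerivAt (fun s : ℝ => (1+s)*Real.log (1+s))
        (1 * Real.log (1+s) + (1+s) * (1/(1+s))) s :=
      da.mul (by simpa using (da.log h1p))
    have d2 : HasDerivAt (fun s : ℝ => (1-s)*Real.log (1-s))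
        ((-1) * Real.log (1-s) + (1-s) * ((-1)/(1-s))) s :=
      db.mul (by simpa using (db.log h1m))
    have d3 : HasDerivAt (fun s : ℝ => s^2) (2*s) s := by
      simpa using (hasDerivAt_pow 2 s)
    have := (d1.add d2).sub d3
    have e1 : (1+s)*(1/(1+s)) = 1 := mul_one_div_cancel h1p
    have e2 : (1-s)*((-1)/(1-s)) = -1 := by
      rw [mul_div_assoc', mul_neg_one, neg_div, div_self h1m]
    exact this.congr_deriv (by rw [e1, e2]; ring)
  have key : MonotoneOn f (Set.Icc 0 u) := by
    apply monotoneOn_of_deriv_nonneg (convex_Icc 0 u)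
    · apply ContinuousOn.sub
      apply ContinuousOn.add
      · apply ContinuousOn.mul (by fun_prop)
        apply Real.continuousOn_log.comp (by fun_prop)
        intro y hy
        simp only [Set.mem_Icc] at hy
        simp only [Set.mem_compl_iff, Set.mem_singleton_iff]
        intro h; linarith [hy.1]
      · apply ContinuousOn.mul (by fun_prop)
        apply Real.continuousOn_log.comp (by fun_prop)
        intro y hy
        simp only [Set.mem_Icc] at hy
        simp only [Set.mem_compl_iff, Set.mem_singleton_iff]
        intro h; linarith [hy.2]
      · fun_prop
    · intro s hs
      rw [interior_Icc] at hs
      exact ((hd s hs.1.le (hs.2.trans h1)).differentiableAt).differentiableWithinAt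
    · intro s hs
      rw [interior_Icc] at hs
      rw [(hd s hs.1.le (hs.2.trans h1)).deriv]
      have := artanh_ge s hs.1.le (hs.2.trans h1)
      linarith
  have h := key (Set.left_mem_Icc.mpr h0) (Set.right_mem_Icc.mpr h0) h0
  simp only [hf] at h
  simp at h
  nlinarith [h]


lemma entropy_quad (t : ℝ) (ht : |t| < 1/2) :
    binEntropy (1/2 + t) ≤ Real.log 2 - 2*t^2 := by
  wlog h0 : 0 ≤ t generalizing t
  · have h := this (-t) (by rw [abs_neg]; exact ht) (by linarith [not_le.mp h0])
    have e : binEntropy (1/2 + -t) = binEntropy (1/2 + t) := by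
      unfold binEntropy
      have e1 : (1:ℝ) - (1/2 + -t) = 1/2 + t := by ring
      have e2 : (1:ℝ) - (1/2 + t) = 1/2 + -t := by ring
      rw [e1, e2]; ring
    rw [e] at h
    calc binEntropy (1/2 + t) ≤ Real.log 2 - 2*(-t)^2 := h
      _ = Real.log 2 - 2*t^2 := by ring
  have ht' : t < 1/2 := lt_of_abs_lt ht
  set u := 2*t with hu
  have hu0 : 0 ≤ u := by linarith
  have hu1 : u < 1 := by linarith
  have h1p : (0:ℝ) < 1+u := by linarith
  have h1m : (0:ℝ) < 1-u := by linarith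
  have e1 : (1:ℝ)/2 + t = (1+u)/2 := by rw [hu]; ring
  have e2 : (1:ℝ) - (1/2 + t) = (1-u)/2 := by rw [hu]; ring
  have l1 : Real.log ((1+u)/2) = Real.log (1+u) - Real.log 2 :=
    Real.log_div h1p.ne' (by norm_num)
  have l2 : Real.log ((1-u)/2) = Real.log (1-u) - Real.log 2 :=
    Real.log_div h1m.ne' (by norm_num)
  have key := klg_ge u hu0 hu1
  unfold binEntropy
  rw [e2, e1, l1, l2]
  have : 2*t^2 = u^2/2 := by rw [hu]; ring
  rw [this]
  nlinarith [key]

theorem entropy_sum_bound (g n x : ℝ) (hg : 0 < g) (hn : 0 ≤ n)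
    (hx1 : |x| < Real.sqrt g)
    (hx2 : |3*x / ((3 + 2*(n/g)) * Real.sqrt g)| < 1) :
    g * binEntropy (1/2 + x/(2*Real.sqrt g)) +
      (3*g + 2*n) * binEntropy (1/2 + 3*x/(2*(3 + 2*(n/g))*Real.sqrt g)) ≤
    g * (2 + n/g) * Real.log 4 - (6 + n/g) * x^2 / (3 + 2*(n/g)) := by
  set s := Real.sqrt g with hs
  have hs0 : 0 < s := Real.sqrt_pos.mpr hg
  have hs2 : s^2 = g := Real.sq_sqrt hg.le
  set l := n/g with hl
  have hl0 : 0 ≤ l := div_nonneg hn hg.le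
  have hcoef : (0:ℝ) < 3 + 2*l := by linarith
  have hgl : g * l = n := by rw [hl]; field_simp
  -- first argument
  have ht1 : |x/(2*s)| < 1/2 := by
    rw [abs_div, abs_of_pos (by linarith : (0:ℝ) < 2*s)]
    rw [div_lt_iff₀ (by linarith : (0:ℝ) < 2*s)]
    calc |x| < s := hx1
      _ = 1/2 * (2*s) := by ring
  have ht2 : |3*x/(2*(3 + 2*l)*s)| < 1/2 := by
    have e : 3*x/(2*(3 + 2*l)*s) = (3*x / ((3 + 2*l) * s)) / 2 := by
      rw [div_div]; congr 1; ring
    rw [e, abs_div, abs_of_pos (by norm_num : (0:ℝ) < 2)]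
    rw [div_lt_iff₀ (by norm_num : (0:ℝ) < 2)]
    calc |3*x / ((3 + 2*l) * s)| < 1 := hx2
      _ = 1/2 * 2 := by norm_num
  have h1 := entropy_quad (x/(2*s)) ht1
  have h2 := entropy_quad (3*x/(2*(3 + 2*l)*s)) ht2
  have hq1 : (x/(2*s))^2 = x^2/(4*g) := by
    rw [div_pow, ← hs2]; ring_nf
  have hq2 : (3*x/(2*(3 + 2*l)*s))^2 = 9*x^2/(4*(3+2*l)^2*g) := by
    rw [div_pow, ← hs2]; ring_nf
  rw [hq1] at h1
  rw [hq2] at h2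
  have hc2 : (0:ℝ) < 3*g + 2*n := by linarith
  have m1 : g * binEntropy (1/2 + x/(2*s)) ≤ g * (Real.log 2 - 2*(x^2/(4*g))) :=
    mul_le_mul_of_nonneg_left h1 hg.le
  have m2 : (3*g + 2*n) * binEntropy (1/2 + 3*x/(2*(3 + 2*l)*s)) ≤
      (3*g + 2*n) * (Real.log 2 - 2*(9*x^2/(4*(3+2*l)^2*g))) :=
    mul_le_mul_of_nonneg_left h2 hc2.le
  have hlog4 : Real.log 4 = 2 * Real.log 2 := by
    rw [show (4:ℝ) = 2^2 by norm_num, Real.log_pow]; norm_num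
  have key : g * (Real.log 2 - 2*(x^2/(4*g))) +
      (3*g + 2*n) * (Real.log 2 - 2*(9*x^2/(4*(3+2*l)^2*g))) =
      g * (2 + l) * Real.log 4 - (6 + l) * x^2 / (3 + 2*l) := by
    rw [hlog4]
    have hn' : n = g * l := hgl.symm
    rw [hn']
    field_simp
    ring
  linarith [m1, m2]
end

section
/- For real λ ≥ 0, g > 0, and real x, setting p = 1/2 + 3x/(2(3+2λ)√g): if |x| < (3+2λ)√g/3 then g·H(1/2 + x/(2√g)) + (3+2λ)g·H(p) ≤ ((2+λ)g)·log 4 − x²·(6+λ)/(3+2λ), where H is the binary entropy (assuming also |x| < √g so the first argument is in (0,1)). -/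
lemma binEntropy_eq_real (p : ℝ) : binEntropy p = Real.binEntropy p := by
  unfold binEntropy Real.binEntropy
  rw [Real.log_inv, Real.log_inv]; ring

/-- `log (1+u) - log (1-u) ≥ 2u` for `u ∈ [0,1)`. -/
lemma log_ratio_ge (u : ℝ) (h0 : 0 ≤ u) (h1 : u < 1) :
    2 * u ≤ Real.log (1 + u) - Real.log (1 - u) := by
  set G : ℝ → ℝ := fun s => Real.log (1 + s) - Real.log (1 - s) - 2 * s with hG
  have hderiv : ∀ t ∈ Set.Ioo (0:ℝ) u, HasDerivAt G (1/(1+t) + 1/(1-t) - 2) t := by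
    intro t ht
    have ht0 : (0:ℝ) < 1 + t := by linarith [ht.1]
    have ht1 : (0:ℝ) < 1 - t := by linarith [ht.2]
    have h1 : HasDerivAt (fun s : ℝ => Real.log (1 + s)) (1/(1+t)) t := by
      have := (Real.hasDerivAt_log (by positivity : (1:ℝ)+t ≠ 0)).comp t
        ((hasDerivAt_id t).const_add 1)
      simpa [one_div, Function.comp_def] using this
    have h2 : HasDerivAt (fun s : ℝ => Real.log (1 - s)) (-(1/(1-t))) t := by
      have := (Real.hasDerivAt_log (by positivity : (1:ℝ)-t ≠ 0)).comp t
        ((hasDerivAt_id t).const_sub 1)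
      simpa [one_div, Function.comp_def] using this
    have h3 : HasDerivAt (fun s : ℝ => 2*s) 2 t := by
      simpa using (hasDerivAt_id t).const_mul 2
    have := (h1.sub h2).sub h3
    simpa [hG, Pi.sub_def] using this.congr_deriv (by ring)
  have hcont : ContinuousOn G (Set.Icc 0 u) := by
    have c1 : ContinuousOn (fun s : ℝ => Real.log (1 + s)) (Set.Icc 0 u) :=
      Real.continuousOn_log.comp (by fun_prop) (fun t ht => by
        have h : (0:ℝ) < 1 + t := by linarith [ht.1]
        simpa using h.ne')
    have c2 : ContinuousOn (fun s : ℝ => Real.log (1 - s)) (Set.Icc 0 u) :=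
      Real.continuousOn_log.comp (by fun_prop) (fun t ht => by
        have h : (0:ℝ) < 1 - t := by linarith [lt_of_le_of_lt ht.2 h1]
        simpa using h.ne')
    exact (c1.sub c2).sub (by fun_prop)
  have hmono : MonotoneOn G (Set.Icc 0 u) := by
    apply monotoneOn_of_deriv_nonneg (convex_Icc 0 u) hcont
    · intro t ht
      rw [interior_Icc] at ht
      exact ((hderiv t ht).differentiableAt).differentiableWithinAt
    · intro t ht
      rw [interior_Icc] at ht
      rw [(hderiv t ht).deriv]
      have ht0 : (0:ℝ) < 1 + t := by linarith [ht.1]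
      have ht1 : (0:ℝ) < 1 - t := by linarith [ht.2, h1]
      rw [sub_nonneg, div_add_div _ _ (ne_of_gt ht0) (ne_of_gt ht1),
        le_div_iff₀ (by positivity)]
      nlinarith [sq_nonneg t]
  have h := hmono (Set.left_mem_Icc.2 h0) (Set.right_mem_Icc.2 h0) h0
  simp [hG] at h
  linarith [h]

/-- Quadratic bound on binary entropy: `H(1/2+ε) ≤ log 2 - 2ε²`. -/
lemma binEntropy_quad (ε : ℝ) (hε : |ε| < 1/2) :
    Real.binEntropy (1/2 + ε) ≤ Real.log 2 - 2 * ε^2 := by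
  -- reduce to ε ≥ 0 by symmetry
  wlog h0 : 0 ≤ ε generalizing ε
  · push_neg at h0
    have := this (-ε) (by rwa [abs_neg]) (by linarith)
    have hsym : Real.binEntropy (1/2 + ε) = Real.binEntropy (1/2 + -ε) := by
      rw [show (1:ℝ)/2 + ε = 2⁻¹ + ε by norm_num, show (1:ℝ)/2 + -ε = 2⁻¹ - ε by ring,
        Real.binEntropy_two_inv_add]
    rw [hsym]
    simpa using this
  have hε2 : ε < 1/2 := lt_of_le_of_lt (le_abs_self ε) hε
  set f : ℝ → ℝ := fun t => Real.log 2 - 2*t^2 - Real.binEntropy (1/2 + t) with hf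
  have hderiv : ∀ t ∈ Set.Ioo (0:ℝ) ε, HasDerivAt f
      (Real.log (1/2 + t) - Real.log (1/2 - t) - 4*t) t := by
    intro t ht
    have ht1 : t < 1/2 := lt_of_lt_of_le ht.2 hε2.le
    have hp0 : (1:ℝ)/2 + t ≠ 0 := by linarith [ht.1]
    have hp1 : (1:ℝ)/2 + t ≠ 1 := by intro h; linarith [h]
    have hb : HasDerivAt (fun t : ℝ => Real.binEntropy (1/2 + t))
        (Real.log (1 - (1/2 + t)) - Real.log (1/2 + t)) t := by
      have := (Real.hasDerivAt_binEntropy hp0 hp1).comp t ((hasDerivAt_id t).const_add (1/2))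
      simpa [Function.comp_def] using this
    have hq : HasDerivAt (fun t : ℝ => Real.log 2 - 2*t^2) (-(4*t)) t := by
      have h1 : HasDerivAt (fun t : ℝ => t^2) (2*t) t := by
        simpa using hasDerivAt_pow 2 t
      have := ((h1.const_mul 2).const_sub (Real.log 2))
      simpa using this.congr_deriv (by ring)
    have := hq.sub hb
    simpa [hf, Pi.sub_def] using this.congr_deriv (by ring_nf)
  have hcont : ContinuousOn f (Set.Icc 0 ε) := by
    apply ContinuousOn.sub (by fun_prop)
    exact (Real.binEntropy_continuous.comp (by fun_prop)).continuousOn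
  have hmono : MonotoneOn f (Set.Icc 0 ε) := by
    apply monotoneOn_of_deriv_nonneg (convex_Icc 0 ε) hcont
    · intro t ht
      rw [interior_Icc] at ht
      exact ((hderiv t ht).differentiableAt).differentiableWithinAt
    · intro t ht
      rw [interior_Icc] at ht
      rw [(hderiv t ht).deriv]
      have ht1 : t < 1/2 := lt_of_lt_of_le ht.2 hε2.le
      have key := log_ratio_ge (2*t) (by linarith [ht.1]) (by linarith)
      have e1 : Real.log (1/2 + t) = Real.log (1 + 2*t) - Real.log 2 := by
        rw [← Real.log_div (by linarith [ht.1]) (by norm_num)]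
        norm_num; ring_nf
      have e2 : Real.log (1/2 - t) = Real.log (1 - 2*t) - Real.log 2 := by
        rw [← Real.log_div (by linarith) (by norm_num)]
        norm_num; ring_nf
      rw [e1, e2]; linarith
  have h := hmono (Set.left_mem_Icc.2 h0) (Set.right_mem_Icc.2 h0) h0
  have hf0 : f 0 = 0 := by
    simp [hf, show (1:ℝ)/2 + 0 = 2⁻¹ by norm_num, Real.binEntropy_two_inv]
  rw [hf0] at h
  simp only [hf] at h
  linarith

theorem entropy_sum_bound' (g lam x : ℝ) (hg : 0 < g) (hlam : 0 ≤ lam)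
    (hx1 : |x| < Real.sqrt g) (hx2 : |x| < (3 + 2*lam) * Real.sqrt g / 3) :
    g * binEntropy (1/2 + x/(2*Real.sqrt g)) +
      (3 + 2*lam) * g * binEntropy (1/2 + 3*x/(2*(3 + 2*lam)*Real.sqrt g)) ≤
    (2 + lam) * g * Real.log 4 - x^2 * (6 + lam) / (3 + 2*lam) := by
  have hs : 0 < Real.sqrt g := Real.sqrt_pos.2 hg
  have hs2 : Real.sqrt g ^ 2 = g := Real.sq_sqrt hg.le
  have hL : (0:ℝ) < 3 + 2*lam := by linarith
  set ε₁ := x/(2*Real.sqrt g) with hε₁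
  set ε₂ := 3*x/(2*(3 + 2*lam)*Real.sqrt g) with hε₂
  have hε₁b : |ε₁| < 1/2 := by
    rw [hε₁, abs_div, abs_of_pos (by positivity : (0:ℝ) < 2*Real.sqrt g),
      div_lt_iff₀ (by positivity)]
    nlinarith
  have hε₂b : |ε₂| < 1/2 := by
    rw [hε₂, abs_div, abs_of_pos (by positivity : (0:ℝ) < 2*(3 + 2*lam)*Real.sqrt g),
      div_lt_iff₀ (by positivity)]
    have h3x : |3*x| = 3 * |x| := by rw [abs_mul]; norm_num
    rw [h3x]
    nlinarith [hx2]
  have h1 := binEntropy_quad ε₁ hε₁b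
  have h2 := binEntropy_quad ε₂ hε₂b
  rw [binEntropy_eq_real, binEntropy_eq_real]
  have key : g * Real.binEntropy (1/2 + ε₁) + (3 + 2*lam) * g * Real.binEntropy (1/2 + ε₂)
      ≤ g * (Real.log 2 - 2*ε₁^2) + (3 + 2*lam) * g * (Real.log 2 - 2*ε₂^2) := by
    have ha := mul_le_mul_of_nonneg_left h1 hg.le
    have hb := mul_le_mul_of_nonneg_left h2 (by positivity : (0:ℝ) ≤ (3 + 2*lam) * g)
    linarith
  refine le_trans key ?_
  have hlog4 : Real.log 4 = 2 * Real.log 2 := by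
    rw [show (4:ℝ) = 2^2 by norm_num, Real.log_pow]; push_cast; ring
  have he1 : g * (2*ε₁^2) = x^2/2 := by
    rw [hε₁]; field_simp; nlinarith [hs2]
  have he2 : (3 + 2*lam) * g * (2*ε₂^2) = 9*x^2/(2*(3+2*lam)) := by
    rw [hε₂]; field_simp; linear_combination (-(9:ℝ)*x^2) * hs2
  have hsum : x^2/2 + 9*x^2/(2*(3+2*lam)) = x^2 * (6 + lam) / (3 + 2*lam) := by
    field_simp; ring
  rw [hlog4]
  have expand : g * (Real.log 2 - 2*ε₁^2) + (3 + 2*lam) * g * (Real.log 2 - 2*ε₂^2)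
      = (2+lam)*g*(2*Real.log 2) - g*(2*ε₁^2) - (3 + 2*lam)*g*(2*ε₂^2) := by ring
  linarith [expand, he1, he2, hsum]
end
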